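/- Let 0 < p ≤ 1 and z ∈ ℝ. Let G : ℕ → ℝ → ℝ satisfy G_0(x) = 1 for all x ∈ [0,1], and for every n ≥ 1 and x ∈ [0,1], G_n(x) = p·z·∫_0^x G_{n−1}(u) du + (1 − p·x)·G_{n−1}(x). Then for every n ≥ 0 and x ∈ [0,1], G_n(x) = Σ_{k=0}^{n} C(n,k) · binom(z−1, k) · p^k · x^k, where C(n,k) is the usual binomial coefficient and binom(z−1, k) = (1/k!)·∏_{i=0}^{k−1} (z − 1 − i) is the generalized binomial coefficient. -/

import Mathlib

open MeasureTheory intervalIntegral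

theorem stmt4 (p z : ℝ) (hp : 0 < p) (hp1 : p ≤ 1)
    (G : ℕ → ℝ → ℝ) (hG0 : ∀ x ∈ Set.Icc (0 : ℝ) 1, G 0 x = 1)
    (hGrec : ∀ n : ℕ, ∀ x ∈ Set.Icc (0 : ℝ) 1,
      G (n + 1) x = p * z * (∫ u in (0 : ℝ)..x, G n u) + (1 - p * x) * G n x) :
    ∀ n : ℕ, ∀ x ∈ Set.Icc (0 : ℝ) 1,
      G n x = ∑ k ∈ Finset.range (n + 1),
        (n.choose k : ℝ) * ((∏ i ∈ Finset.range k, (z - 1 - (i : ℝ))) / (k.factorial : ℝ))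
          * p ^ k * x ^ k := by
  set b : ℕ → ℝ := fun k => (∏ i ∈ Finset.range k, (z - 1 - (i : ℝ))) / (k.factorial : ℝ)
    with hbdef
  have hbsucc : ∀ k : ℕ, b (k + 1) = b k * (z - 1 - k) / (k + 1) := by
    intro k
    have hk : (k.factorial : ℝ) ≠ 0 := Nat.cast_ne_zero.mpr k.factorial_ne_zero
    have hk1 : ((k : ℝ) + 1) ≠ 0 := by positivity
    have hfac : (((k+1).factorial : ℕ) : ℝ) = ((k:ℝ) + 1) * (k.factorial : ℝ) := by
      push_cast [Nat.factorial_succ]; ring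
    simp only [hbdef, Finset.prod_range_succ, hfac]
    rw [div_mul_eq_mul_div, div_div, mul_comm ((k.factorial : ℝ)) ((k:ℝ) + 1)]
  intro n
  induction n with
  | zero =>
    intro x hx
    simpa [b] using hG0 x hx
  | succ n ih =>
    intro x hx
    obtain ⟨hx0, hx1⟩ := hx
    rw [hGrec n x ⟨hx0, hx1⟩, ih x ⟨hx0, hx1⟩]
    have hint : (∫ u in (0:ℝ)..x, G n u)
        = ∫ u in (0:ℝ)..x, ∑ k ∈ Finset.range (n+1),
            (n.choose k : ℝ) * b k * p ^ k * u ^ k := by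
      apply intervalIntegral.integral_congr
      intro u hu
      rw [Set.uIcc_of_le hx0] at hu
      exact ih u ⟨hu.1, le_trans hu.2 hx1⟩
    rw [hint, intervalIntegral.integral_finset_sum (fun k _ =>
      (intervalIntegrable_pow k).const_mul _)]
    have hintk : ∀ k ∈ Finset.range (n+1),
        (∫ u in (0:ℝ)..x, (n.choose k : ℝ) * b k * p ^ k * u ^ k)
          = (n.choose k : ℝ) * b k * p ^ k * (x ^ (k+1) / (k+1)) := by
      intro k _
      rw [intervalIntegral.integral_const_mul, integral_pow]
      norm_num
    rw [Finset.sum_congr rfl hintk]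
    -- algebraic step
    have step1 : p * z * (∑ k ∈ Finset.range (n+1),
          (n.choose k : ℝ) * b k * p ^ k * (x ^ (k+1) / (k+1)))
        + (1 - p * x) * (∑ k ∈ Finset.range (n+1),
          (n.choose k : ℝ) * b k * p ^ k * x ^ k)
        = ∑ k ∈ Finset.range (n+1),
          ((n.choose k : ℝ) * b k * p ^ k * x ^ k
            + (n.choose k : ℝ) * b (k+1) * p ^ (k+1) * x ^ (k+1)) := by
      rw [Finset.mul_sum, Finset.mul_sum, ← Finset.sum_add_distrib]
      refine Finset.sum_congr rfl fun k _ => ?_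
      have hk1 : ((k : ℝ) + 1) ≠ 0 := by positivity
      rw [hbsucc k]
      field_simp
      ring
    rw [step1]
    rw [Finset.sum_add_distrib]
    rw [Finset.sum_range_succ' (fun k => ((n+1).choose k : ℝ) * b k * p ^ k * x ^ k) (n+1)]
    have h1 : ∑ k ∈ Finset.range (n+1),
        (n.choose k : ℝ) * b (k+1) * p ^ (k+1) * x ^ (k+1)
        = ∑ k ∈ Finset.range (n+1),
          ((n+1).choose (k+1) : ℝ) * b (k+1) * p ^ (k+1) * x ^ (k+1)
          - ∑ k ∈ Finset.range (n+1),
            (n.choose (k+1) : ℝ) * b (k+1) * p ^ (k+1) * x ^ (k+1) := by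
      rw [eq_sub_iff_add_eq, ← Finset.sum_add_distrib]
      refine Finset.sum_congr rfl fun k _ => ?_
      rw [Nat.choose_succ_succ, Nat.cast_add]
      ring
    have h2 : ∑ k ∈ Finset.range (n+1),
        (n.choose (k+1) : ℝ) * b (k+1) * p ^ (k+1) * x ^ (k+1)
        = ∑ k ∈ Finset.range (n+1), (n.choose k : ℝ) * b k * p ^ k * x ^ k
          - (n.choose 0 : ℝ) * b 0 * p ^ 0 * x ^ 0 := by
      rw [eq_sub_iff_add_eq,
        ← Finset.sum_range_succ' (fun k => (n.choose k : ℝ) * b k * p ^ k * x ^ k) (n+1),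
        Finset.sum_range_succ]
      simp [Nat.choose_succ_self]
    rw [h1, h2]
    simp [Nat.choose_zero_right]
    ring
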